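/- Let r be a positive integer, N a positive integer, A ∈ ℂ^{N×N} an invertible matrix, and let A^r = UΣV* be a singular value decomposition of A^r with singular values σ_1(A^r) ≥ ⋯ ≥ σ_N(A^r) on the diagonal of Σ. Suppose that for some j ∈ {1,…,N} and some α > 0 one has (σ_j(A^r))^{1/r} ≤ α·σ_N(A). Then the j-th column v_j of V satisfies ‖v_j‖_∞ ≤ α^r σ_N(A) · max_{k ∈ {1,…,N}} ‖(A^{−1})* e_k‖_2, where e_k is the k-th standard basis vector and (A^{−1})* is the conjugate transpose of A^{−1}. -/

import Mathlib

open Matrix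

/-- `τ : Fin N → ℝ` lists the singular values of `A` in nonincreasing order, i.e. it is a
nonincreasing rearrangement of the square roots of the eigenvalues of `Aᴴ * A`. -/
def IsSingularValuesDesc {N : ℕ} (A : Matrix (Fin N) (Fin N) ℂ) (τ : Fin N → ℝ) : Prop :=
  Antitone τ ∧ ∃ (h : (Aᴴ * A).IsHermitian) (e : Fin N ≃ Fin N),
    ∀ i, τ i = Real.sqrt (h.eigenvalues (e i))

noncomputable def nsq {N : ℕ} (v : Fin N → ℂ) : ℝ := ∑ i, ‖v i‖ ^ 2
noncomputable def nrm {N : ℕ} (v : Fin N → ℂ) : ℝ := Real.sqrt (nsq v)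

lemma nsq_nonneg {N : ℕ} (v : Fin N → ℂ) : 0 ≤ nsq v :=
  Finset.sum_nonneg fun _ _ => sq_nonneg _

lemma nrm_nonneg {N : ℕ} (v : Fin N → ℂ) : 0 ≤ nrm v := Real.sqrt_nonneg _

lemma nrm_mul_self {N : ℕ} (v : Fin N → ℂ) : nrm v * nrm v = nsq v :=
  Real.mul_self_sqrt (nsq_nonneg v)

lemma dot_star_self {N : ℕ} (v : Fin N → ℂ) : star v ⬝ᵥ v = (nsq v : ℂ) := by
  simp only [dotProduct, nsq, Pi.star_apply, Complex.ofReal_sum]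
  refine Finset.sum_congr rfl fun i _ => ?_
  rw [Complex.star_def, Complex.sq_norm, ← Complex.normSq_eq_conj_mul_self]

lemma cs {N : ℕ} (v w : Fin N → ℂ) : ‖v ⬝ᵥ w‖ ≤ nrm v * nrm w := by
  have h := norm_inner_le_norm (𝕜 := ℂ)
    ((WithLp.equiv 2 (Fin N → ℂ)).symm (star v)) ((WithLp.equiv 2 (Fin N → ℂ)).symm w)
  have h1 : (inner ℂ ((WithLp.equiv 2 (Fin N → ℂ)).symm (star v))
      ((WithLp.equiv 2 (Fin N → ℂ)).symm w) : ℂ) = v ⬝ᵥ w := by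
    simp [PiLp.inner_apply, dotProduct, WithLp.equiv_symm_apply, PiLp.toLp_apply]
    exact Finset.sum_congr rfl fun i _ => mul_comm _ _
  have h2 : ‖(WithLp.equiv 2 (Fin N → ℂ)).symm (star v)‖ = nrm v := by
    simp [EuclideanSpace.norm_eq, WithLp.equiv_symm_apply, PiLp.toLp_apply, nrm, nsq]
  have h3 : ‖(WithLp.equiv 2 (Fin N → ℂ)).symm w‖ = nrm w := by
    simp [EuclideanSpace.norm_eq, WithLp.equiv_symm_apply, PiLp.toLp_apply, nrm, nsq]
  rw [h1, h2, h3] at h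
  simpa using h

lemma rayleigh {N : ℕ} (A : Matrix (Fin N) (Fin N) ℂ) {s : ℝ} (hs : 0 ≤ s)
    (hH : (Aᴴ * A).IsHermitian) (hsle : ∀ k, s ≤ Real.sqrt (hH.eigenvalues k))
    (v : Fin N → ℂ) : s ^ 2 * nsq v ≤ nsq (A *ᵥ v) := by
  set W : Matrix (Fin N) (Fin N) ℂ := (hH.eigenvectorUnitary : Matrix (Fin N) (Fin N) ℂ) with hWdef
  have hWW : W * star W = 1 := (mem_unitaryGroup_iff).mp hH.eigenvectorUnitary.2
  set w : Fin N → ℂ := star W *ᵥ v with hw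
  have hsw : star w = star v ᵥ* W := by
    rw [hw, star_mulVec, star_eq_conjTranspose, conjTranspose_conjTranspose]
  have h2 : nsq w = nsq v := by
    have hcc : star w ⬝ᵥ w = star v ⬝ᵥ v := by
      rw [hsw, hw, dotProduct_mulVec, vecMul_vecMul, star_eq_conjTranspose,
        ← star_eq_conjTranspose, hWW, vecMul_one]
    have := (dot_star_self w).symm.trans (hcc.trans (dot_star_self v))
    exact_mod_cast this
  have h1 : nsq (A *ᵥ v) = ∑ k, hH.eigenvalues k * ‖w k‖ ^ 2 := by
    have e1 : star (A *ᵥ v) ⬝ᵥ (A *ᵥ v) = (star v ᵥ* (Aᴴ * A)) ⬝ᵥ v := by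
      rw [star_mulVec, dotProduct_mulVec, vecMul_vecMul]
    rw [hH.spectral_theorem, Unitary.conjStarAlgAut_apply, ← hWdef] at e1
    have e2 : (star v ᵥ* (W * diagonal (RCLike.ofReal ∘ hH.eigenvalues) * star W)) ⬝ᵥ v
        = (star w ᵥ* diagonal (RCLike.ofReal ∘ hH.eigenvalues)) ⬝ᵥ w := by
      rw [← vecMul_vecMul, ← vecMul_vecMul, hsw, hw, dotProduct_mulVec]
    rw [e2] at e1
    have e3 : (star w ᵥ* diagonal (RCLike.ofReal ∘ hH.eigenvalues)) ⬝ᵥ w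
        = ((∑ k, hH.eigenvalues k * ‖w k‖ ^ 2 : ℝ) : ℂ) := by
      simp only [dotProduct, vecMul_diagonal, Pi.star_apply, Complex.ofReal_sum,
        Function.comp_apply]
      refine Finset.sum_congr rfl fun k _ => ?_
      have hco : (RCLike.ofReal (hH.eigenvalues k) : ℂ) = ((hH.eigenvalues k : ℝ) : ℂ) := rfl
      rw [hco, Complex.ofReal_mul, Complex.sq_norm, Complex.star_def]
      calc (starRingEnd ℂ) (w k) * ((hH.eigenvalues k : ℝ) : ℂ) * w k
          = ((hH.eigenvalues k : ℝ) : ℂ) * ((starRingEnd ℂ) (w k) * w k) := by ring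
        _ = _ := by rw [← Complex.normSq_eq_conj_mul_self]
    rw [e3] at e1
    have := (dot_star_self (A *ᵥ v)).symm.trans e1
    exact_mod_cast this
  rw [h1, ← h2, nsq, Finset.mul_sum]
  refine Finset.sum_le_sum fun k _ => ?_
  have hkn : 0 ≤ hH.eigenvalues k := Matrix.eigenvalues_conjTranspose_mul_self_nonneg A k
  have hs2 : s ^ 2 ≤ hH.eigenvalues k := by
    have h1 := hsle k
    have h2 := Real.sq_sqrt hkn
    nlinarith [Real.sqrt_nonneg (hH.eigenvalues k)]
  exact mul_le_mul_of_nonneg_right hs2 (sq_nonneg _)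

lemma nrm_mulVec_ge {N : ℕ} (A : Matrix (Fin N) (Fin N) ℂ) {s : ℝ} (hs : 0 ≤ s)
    (hH : (Aᴴ * A).IsHermitian) (hsle : ∀ k, s ≤ Real.sqrt (hH.eigenvalues k))
    (v : Fin N → ℂ) : s * nrm v ≤ nrm (A *ᵥ v) := by
  have h := rayleigh A hs hH hsle v
  have h1 : s * nrm v = Real.sqrt (s ^ 2 * nsq v) := by
    rw [Real.sqrt_mul (sq_nonneg s), Real.sqrt_sq hs]; rfl
  rw [h1, nrm]
  exact Real.sqrt_le_sqrt h

lemma nrm_star_eq {N : ℕ} (v : Fin N → ℂ) : nrm (star v) = nrm v := by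
  simp [nrm, nsq, Complex.norm_conj]

lemma nrm_conjTranspose_mulVec_ge {N : ℕ} (A : Matrix (Fin N) (Fin N) ℂ) (hA : IsUnit A.det)
    {s : ℝ} (hs : 0 ≤ s) (hH : (Aᴴ * A).IsHermitian)
    (hsle : ∀ k, s ≤ Real.sqrt (hH.eigenvalues k)) (v : Fin N → ℂ) :
    s * nrm v ≤ nrm (Aᴴ *ᵥ v) := by
  set u : Fin N → ℂ := A⁻¹ *ᵥ v with hu
  have hAu : A *ᵥ u = v := by rw [hu, mulVec_mulVec, mul_nonsing_inv _ hA, one_mulVec]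
  have hcs : nsq v ≤ nrm (Aᴴ *ᵥ v) * nrm u := by
    have e1 : star (Aᴴ *ᵥ v) ⬝ᵥ u = (nsq v : ℂ) := by
      rw [star_mulVec, conjTranspose_conjTranspose, ← dotProduct_mulVec, hAu, dot_star_self]
    calc nsq v = ‖star (Aᴴ *ᵥ v) ⬝ᵥ u‖ := by
          rw [e1, Complex.norm_real, Real.norm_eq_abs, abs_of_nonneg (nsq_nonneg v)]
      _ ≤ nrm (star (Aᴴ *ᵥ v)) * nrm u := cs _ _
      _ = nrm (Aᴴ *ᵥ v) * nrm u := by rw [nrm_star_eq]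
  have hkey2 : s * nrm u ≤ nrm v := by
    have h := nrm_mulVec_ge A hs hH hsle u
    rwa [hAu] at h
  rcases eq_or_lt_of_le (nrm_nonneg v) with h0 | h0
  · rw [← h0, mul_zero]; exact nrm_nonneg _
  · have h3 : (s * nrm v) * nrm v ≤ nrm (Aᴴ *ᵥ v) * nrm v := by
      calc (s * nrm v) * nrm v = s * nsq v := by rw [← nrm_mul_self]; ring
        _ ≤ s * (nrm (Aᴴ *ᵥ v) * nrm u) := mul_le_mul_of_nonneg_left hcs hs
        _ = nrm (Aᴴ *ᵥ v) * (s * nrm u) := by ring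
        _ ≤ nrm (Aᴴ *ᵥ v) * nrm v := mul_le_mul_of_nonneg_left hkey2 (nrm_nonneg _)
    exact le_of_mul_le_mul_right h3 h0

lemma nrm_pow_inv_conjTranspose {N : ℕ} (A : Matrix (Fin N) (Fin N) ℂ) (hA : IsUnit A.det)
    {s : ℝ} (hs : 0 ≤ s) (hH : (Aᴴ * A).IsHermitian)
    (hsle : ∀ k, s ≤ Real.sqrt (hH.eigenvalues k)) :
    ∀ (n : ℕ) (v : Fin N → ℂ), s ^ n * nrm ((Aᴴ)⁻¹ ^ n *ᵥ v) ≤ nrm v := by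
  have key4 : ∀ v, s * nrm ((Aᴴ)⁻¹ *ᵥ v) ≤ nrm v := by
    intro v
    have hAdet : IsUnit (Aᴴ).det := by rw [det_conjTranspose]; exact hA.star
    have hv : Aᴴ *ᵥ ((Aᴴ)⁻¹ *ᵥ v) = v := by
      rw [mulVec_mulVec, mul_nonsing_inv _ hAdet, one_mulVec]
    have h := nrm_conjTranspose_mulVec_ge A hA hs hH hsle ((Aᴴ)⁻¹ *ᵥ v)
    rwa [hv] at h
  intro n
  induction n with
  | zero => intro v; simp [one_mulVec]
  | succ n ih =>
    intro v
    have h1 : (Aᴴ)⁻¹ ^ (n + 1) *ᵥ v = (Aᴴ)⁻¹ ^ n *ᵥ ((Aᴴ)⁻¹ *ᵥ v) := by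
      rw [mulVec_mulVec, ← pow_succ]
    rw [h1, pow_succ]
    calc s ^ n * s * nrm ((Aᴴ)⁻¹ ^ n *ᵥ ((Aᴴ)⁻¹ *ᵥ v))
        = s * (s ^ n * nrm ((Aᴴ)⁻¹ ^ n *ᵥ ((Aᴴ)⁻¹ *ᵥ v))) := by ring
      _ ≤ s * nrm ((Aᴴ)⁻¹ *ᵥ v) := mul_le_mul_of_nonneg_left (ih _) hs
      _ ≤ nrm v := key4 v

/-- Let `A ∈ ℂ^{N×N}` be invertible and let `A^r = U Σ Vᴴ` be an SVD of `A^r` with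
nonincreasing singular values `σ` on the diagonal of `Σ`.  If `(σ_j)^{1/r} ≤ α σ_N(A)`
for some `j` and `α > 0`, then the `j`-th column `v_j` of `V` satisfies
`‖v_j‖_∞ ≤ α^r σ_N(A) · max_k ‖(A⁻¹)ᴴ e_k‖₂`. -/
theorem linfty_bound_right_singular_vector_of_power (r N : ℕ) (hr : 0 < r) (hN : 0 < N)
    (A : Matrix (Fin N) (Fin N) ℂ) (hA : IsUnit A.det)
    (U V : Matrix (Fin N) (Fin N) ℂ)
    (hU : U ∈ Matrix.unitaryGroup (Fin N) ℂ) (hV : V ∈ Matrix.unitaryGroup (Fin N) ℂ)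
    (σ : Fin N → ℝ) (hσanti : Antitone σ) (hσnonneg : ∀ i, 0 ≤ σ i)
    (hSVD : A ^ r = U * Matrix.diagonal (fun i => (σ i : ℂ)) * Vᴴ)
    (τ : Fin N → ℝ) (hτ : IsSingularValuesDesc A τ)
    (j : Fin N) (α : ℝ) (hα : 0 < α)
    (hcond : σ j ^ ((r : ℝ)⁻¹) ≤ α * τ ⟨N - 1, Nat.sub_lt hN Nat.one_pos⟩) :
    ∀ i, ‖V i j‖ ≤
      α ^ r * τ ⟨N - 1, Nat.sub_lt hN Nat.one_pos⟩ *
        ⨆ k : Fin N, Real.sqrt (∑ i', ‖(A⁻¹)ᴴ i' k‖ ^ 2) := by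
  intro i
  obtain ⟨hτanti, hH, e, hτeq⟩ := hτ
  set m : Fin N := ⟨N - 1, Nat.sub_lt hN Nat.one_pos⟩ with hm
  set s : ℝ := τ m with hsdef
  have hs0 : 0 ≤ s := by rw [hsdef, hτeq]; exact Real.sqrt_nonneg _
  have hsle : ∀ k, s ≤ Real.sqrt (hH.eigenvalues k) := by
    intro k
    have hle : e.symm k ≤ m := by
      rw [Fin.le_def]
      have := (e.symm k).isLt
      simp only [hm]
      omega
    rw [hsdef]
    have h := hτanti hle
    rwa [hτeq (e.symm k), Equiv.apply_symm_apply] at h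
  have hσj : σ j ≤ α ^ r * s ^ r := by
    have h0 : 0 ≤ σ j ^ ((r : ℝ)⁻¹) := Real.rpow_nonneg (hσnonneg j) _
    have h1 := pow_le_pow_left₀ h0 hcond r
    have h2 : (σ j ^ ((r : ℝ)⁻¹)) ^ r = σ j := by
      rw [← Real.rpow_natCast (σ j ^ ((r : ℝ)⁻¹)) r, ← Real.rpow_mul (hσnonneg j),
        inv_mul_cancel₀ (by exact_mod_cast hr.ne' : ((r : ℝ) ≠ 0)), Real.rpow_one]
    rw [h2, mul_pow] at h1
    exact h1
  have hV' : Vᴴ * V = 1 := by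
    have h := mem_unitaryGroup_iff'.mp hV; rwa [star_eq_conjTranspose] at h
  have hU' : Uᴴ * U = 1 := by
    have h := mem_unitaryGroup_iff'.mp hU; rwa [star_eq_conjTranspose] at h
  have hAV : A ^ r * V = U * diagonal (fun i => (σ i : ℂ)) := by
    rw [hSVD, mul_assoc, hV', mul_one]
  set vj : Fin N → ℂ := fun k => V k j with hvj
  set uj : Fin N → ℂ := fun k => U k j with huj
  have h2 : A ^ r *ᵥ vj = fun i' => (σ j : ℂ) * U i' j := by
    funext i'
    have h := congrFun (congrFun hAV i') j
    rw [mul_apply, mul_diagonal] at h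
    simp only [mulVec, dotProduct, hvj]
    rw [h, mul_comm]
  have hdet : IsUnit (A ^ r).det := by rw [det_pow]; exact hA.pow r
  set M : Matrix (Fin N) (Fin N) ℂ := (A ^ r)⁻¹ with hM
  have h3 : vj = (σ j : ℂ) • (M *ᵥ uj) := by
    have hinv : M *ᵥ (A ^ r *ᵥ vj) = vj := by
      rw [mulVec_mulVec, hM, nonsing_inv_mul _ hdet, one_mulVec]
    rw [← hinv, h2]
    have hfun : (fun i' => (σ j : ℂ) * U i' j) = (σ j : ℂ) • uj := by
      funext i'; simp [huj, Pi.smul_apply, smul_eq_mul]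
    rw [hfun, mulVec_smul]
  have habs : ‖V i j‖ = σ j * ‖(M *ᵥ uj) i‖ := by
    have hv : V i j = vj i := rfl
    rw [hv, h3]
    simp [Pi.smul_apply, smul_eq_mul, norm_mul, Complex.norm_real, Real.norm_eq_abs, abs_of_nonneg (hσnonneg j)]
  have huj1 : nrm uj = 1 := by
    have hd : star uj ⬝ᵥ uj = 1 := by
      have h := congrFun (congrFun hU' j) j
      simp only [mul_apply, conjTranspose_apply, one_apply_eq] at h
      simpa [dotProduct, huj] using h
    have hc : (nsq uj : ℂ) = 1 := by rw [← dot_star_self]; exact hd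
    have hre : nsq uj = 1 := by exact_mod_cast hc
    rw [nrm, hre, Real.sqrt_one]
  set Mi : Fin N → ℂ := fun k => M i k with hMi
  have hXle : ‖(M *ᵥ uj) i‖ ≤ nrm Mi := by
    have hd : (M *ᵥ uj) i = Mi ⬝ᵥ uj := rfl
    rw [hd]
    calc ‖Mi ⬝ᵥ uj‖ ≤ nrm Mi * nrm uj := cs _ _
      _ = nrm Mi := by rw [huj1, mul_one]
  set B : Matrix (Fin N) (Fin N) ℂ := (Aᴴ)⁻¹ with hB
  have hBM : B ^ r = Mᴴ := by
    rw [hB, hM, inv_pow', conjTranspose_nonsing_inv, conjTranspose_pow]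
  have hnrmMi : nrm Mi = nrm (fun k => (B ^ r) k i) := by
    simp [nrm, nsq, hMi, hBM, conjTranspose_apply, Complex.norm_conj]
  set ci : Fin N → ℂ := fun k => B k i with hci
  have hrr : r = (r - 1) + 1 := (Nat.succ_pred_eq_of_pos hr).symm
  have hpow : B ^ r = B ^ (r - 1) * B := by conv_lhs => rw [hrr, pow_succ]
  have hcol : (fun k => (B ^ r) k i) = B ^ (r - 1) *ᵥ ci := by
    funext k
    rw [hpow]
    simp [mul_apply, mulVec, dotProduct, hci]
  have hkey := nrm_pow_inv_conjTranspose A hA hs0 hH hsle (r - 1) ci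
  set S : ℝ := ⨆ k : Fin N, Real.sqrt (∑ i', ‖(A⁻¹)ᴴ i' k‖ ^ 2) with hS
  have hciS : nrm ci ≤ S := by
    have hle : nrm ci = Real.sqrt (∑ i', ‖(A⁻¹)ᴴ i' i‖ ^ 2) := by
      simp [nrm, nsq, hci, hB, ← conjTranspose_nonsing_inv, conjTranspose_apply,
        Complex.norm_conj]
    rw [hle, hS]
    exact le_ciSup (f := fun k => Real.sqrt (∑ i', ‖(A⁻¹)ᴴ i' k‖ ^ 2))
      (Set.Finite.bddAbove (Set.finite_range _)) i
  have hS0 : 0 ≤ S := le_trans (nrm_nonneg ci) hciS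
  rw [habs]
  have hsr : s ^ r = s ^ (r - 1) * s := by conv_lhs => rw [hrr, pow_succ]
  have hαr : 0 ≤ α ^ r := pow_nonneg hα.le r
  calc σ j * ‖(M *ᵥ uj) i‖
      ≤ (α ^ r * s ^ r) * nrm Mi :=
        mul_le_mul hσj hXle (norm_nonneg _) (mul_nonneg hαr (pow_nonneg hs0 r))
    _ = α ^ r * (s * (s ^ (r - 1) * nrm Mi)) := by rw [hsr]; ring
    _ ≤ α ^ r * (s * nrm ci) := by
        apply mul_le_mul_of_nonneg_left _ hαr
        apply mul_le_mul_of_nonneg_left _ hs0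
        rw [hnrmMi, hcol]; exact hkey
    _ ≤ α ^ r * (s * S) :=
        mul_le_mul_of_nonneg_left (mul_le_mul_of_nonneg_left hciS hs0) hαr
    _ = α ^ r * s * S := by ring
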